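/- Let M be a non-trivial self-descriptive square of order n. Then the sum Σr_n of the entries of the bottom row (which equals the sum Σc_n of the entries of the rightmost column) has the same parity as n; that is, Σr_n ≡ n (mod 2). -/

import Mathlib

/-- The frequency of a value `v` in a square matrix `M`: the number of cells `(i,j)`
with `M i j = v`. -/
def freq {n : ℕ} (M : Matrix (Fin (n + 1)) (Fin (n + 1)) ℤ) (v : ℤ) : ℕ :=
  (Finset.univ.filter fun p : Fin (n + 1) × Fin (n + 1) => M p.1 p.2 = v).card

/-- A square matrix is self-descriptive if every row sum equals the frequency of that
row's rightmost entry, and every column sum equals the frequency of that column's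
bottom entry. -/
def IsSD {n : ℕ} (M : Matrix (Fin (n + 1)) (Fin (n + 1)) ℤ) : Prop :=
  (∀ i, ∑ j, M i j = (freq M (M i (Fin.last n)) : ℤ)) ∧
  (∀ j, ∑ i, M i j = (freq M (M (Fin.last n) j) : ℤ))

/-- A cell is in the border if it lies in the last row or the last column. -/
def InBorder {n : ℕ} (p : Fin (n + 1) × Fin (n + 1)) : Prop :=
  p.1 = Fin.last n ∨ p.2 = Fin.last n

/-- A square is non-trivial if the `2n-1` border entries are pairwise distinct and
every value appearing in the square appears in the border. -/
def NonTrivial {n : ℕ} (M : Matrix (Fin (n + 1)) (Fin (n + 1)) ℤ) : Prop :=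
  (∀ p q : Fin (n + 1) × Fin (n + 1), InBorder p → InBorder q →
      M p.1 p.2 = M q.1 q.2 → p = q) ∧
  (∀ i j : Fin (n + 1), ∃ p : Fin (n + 1) × Fin (n + 1), InBorder p ∧ M p.1 p.2 = M i j)

/-- In a non-trivial self-descriptive square of order `n+1`, the bottom-row sum
has the same parity as the order `n+1`. -/
theorem stmt1 {n : ℕ} (M : Matrix (Fin (n + 1)) (Fin (n + 1)) ℤ)
    (hsd : IsSD M) (hnt : NonTrivial M) :
    (∑ j, M (Fin.last n) j) ≡ ((n : ℤ) + 1) [ZMOD 2] := by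
  classical
  obtain ⟨hrow, hcol⟩ := hsd
  obtain ⟨hinj, hsurj⟩ := hnt
  set N := Fin.last n with hN
  set A : Finset (Fin (n+1) × Fin (n+1)) :=
    Finset.univ.filter (fun p => ∃ i, M p.1 p.2 = M i N) with hAdef
  set B : Finset (Fin (n+1) × Fin (n+1)) :=
    Finset.univ.filter (fun p => ∃ j, M p.1 p.2 = M N j) with hBdef
  have hA : ∑ i, freq M (M i N) = A.card := by
    have hAeq : A = Finset.univ.biUnion
        (fun i => Finset.univ.filter (fun p : Fin (n+1) × Fin (n+1) => M p.1 p.2 = M i N)) := by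
      ext p
      simp [hAdef]
    rw [hAeq, Finset.card_biUnion]
    · rfl
    · intro i _ j _ hij
      refine Finset.disjoint_left.mpr ?_
      intro p hp hq
      simp only [Finset.mem_filter] at hp hq
      apply hij
      have := hinj (i, N) (j, N) (Or.inr rfl) (Or.inr rfl) (by rw [← hp.2, hq.2])
      exact congrArg Prod.fst this
  have hB : ∑ j, freq M (M N j) = B.card := by
    have hBeq : B = Finset.univ.biUnion
        (fun j => Finset.univ.filter (fun p : Fin (n+1) × Fin (n+1) => M p.1 p.2 = M N j)) := by
      ext p
      simp [hBdef]
    rw [hBeq, Finset.card_biUnion]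
    · rfl
    · intro i _ j _ hij
      refine Finset.disjoint_left.mpr ?_
      intro p hp hq
      simp only [Finset.mem_filter] at hp hq
      apply hij
      have := hinj (N, i) (N, j) (Or.inl rfl) (Or.inl rfl) (by rw [← hp.2, hq.2])
      exact congrArg Prod.snd this
  have hUnion : A ∪ B = Finset.univ := by
    ext p
    simp only [Finset.mem_union, Finset.mem_univ, iff_true, hAdef, hBdef,
      Finset.mem_filter, true_and]
    obtain ⟨q, hq, hqv⟩ := hsurj p.1 p.2
    rcases hq with h1 | h2
    · right; exact ⟨q.2, by rw [← hqv, hN, ← h1]⟩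
    · left; exact ⟨q.1, by rw [← hqv, hN, ← h2]⟩
  have hInter : A ∩ B = Finset.univ.filter
      (fun p : Fin (n+1) × Fin (n+1) => M p.1 p.2 = M N N) := by
    ext p
    simp only [Finset.mem_inter, hAdef, hBdef, Finset.mem_filter, Finset.mem_univ, true_and]
    constructor
    · rintro ⟨⟨i, hi⟩, ⟨j, hj⟩⟩
      have heq : M i N = M N j := by rw [← hi, hj]
      have := hinj (i, N) (N, j) (Or.inr rfl) (Or.inl rfl) heq
      have h1 : i = N := congrArg Prod.fst this
      rw [hi, h1]
    · intro h
      exact ⟨⟨N, h⟩, ⟨N, h⟩⟩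
  have hcards : A.card + B.card = (n+1) * (n+1) + freq M (M N N) := by
    have := Finset.card_union_add_card_inter A B
    rw [hUnion, hInter] at this
    have huniv : (Finset.univ : Finset (Fin (n+1) × Fin (n+1))).card = (n+1) * (n+1) := by
      simp
    rw [huniv] at this
    exact this.symm
  set S : ℤ := ∑ i, ∑ j, M i j with hSdef
  have hS1 : S = (A.card : ℤ) := by
    rw [hSdef, Finset.sum_congr rfl (fun i _ => hrow i), ← hA]
    push_cast
    rfl
  have hS2 : S = (B.card : ℤ) := by
    rw [hSdef, show (∑ i, ∑ j, M i j) = ∑ j, ∑ i, M i j from Finset.sum_comm, Finset.sum_congr rfl (fun j _ => hcol j), ← hB]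
    push_cast
    rfl
  have hR : ∑ j, M N j = (freq M (M N N) : ℤ) := hrow N
  have hEq : ∑ j, M N j = 2 * S - ((n : ℤ) + 1) ^ 2 := by
    have hc : (A.card : ℤ) + (B.card : ℤ) = ((n : ℤ)+1) * ((n : ℤ)+1) + (freq M (M N N) : ℤ) := by
      exact_mod_cast congrArg (fun x : ℕ => (x : ℤ)) hcards
    rw [hR]
    rw [hS1] at hS2 ⊢
    nlinarith [hc]
  obtain ⟨k, hk⟩ := Int.even_mul_succ_self ((n : ℤ) + 1)
  have hdvd : (2 : ℤ) ∣ ((n : ℤ) + 1) - ∑ j, M N j := by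
    refine ⟨k - S, ?_⟩
    linear_combination hk - hEq
  exact (Int.modEq_iff_dvd).mpr hdvd
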